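/- Concatenation of twisted curves: let γ and δ be two closed edge-paths in a graph based at a common vertex q, such that every corner of γ other than possibly q is ascending and every corner of δ other than possibly q is ascending, and such that in the concatenation β = δ ∗ γ the vertex q ceases to be a corner (the incoming edge of one path smoothly continues into the outgoing edge of the other). If β has at least one corner, then β contains a closed sub-path which is a positive twisted curve (at least one corner, all corners ascending). -/
import Mathlib


structure DirGraph where
  V : Type
  E : Type
  src : E → V
  tgt : E → V

structure ClosedEdgePath (G : DirGraph) (n : ℕ) where
  edges : ℕ → G.E
  periodic : ∀ i, edges (i + n) = edges i
  compat : ∀ i, G.tgt (edges i) = G.src (edges (i + 1))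

/-- `some true` = ascending corner, `some false` = descending corner, `none` = smooth. -/
def IsPositiveTwisted (G : DirGraph) (lab : G.E → G.E → Option Bool)
    {n : ℕ} (p : ClosedEdgePath G n) : Prop :=
  (∃ i, lab (p.edges i) (p.edges (i + 1)) ≠ none) ∧
    ∀ i, lab (p.edges i) (p.edges (i + 1)) ≠ some false

def IsSubPath (G : DirGraph) {m n : ℕ} (δ : ClosedEdgePath G m)
    (γ : ClosedEdgePath G n) : Prop :=
  ∃ s : ℕ, ∀ j < m, δ.edges j = γ.edges (s + j)

/-- let `γ` (of length `n`) and `δ` (of length `m`) be closed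
edge-paths based at a common vertex `q`, all of whose corners away from the
basepoint are ascending.  If in the concatenation `β = δ ∗ γ` the basepoint `q`
ceases to be a corner (the passages between the two paths at `q` are smooth) and
`β` has at least one corner, then `β` contains a closed sub-path which is a
positive twisted curve. -/

lemma edges_mod (G : DirGraph) {N : ℕ} (hN : 0 < N) (p : ClosedEdgePath G N) (i : ℕ) :
    p.edges i = p.edges (i % N) := by
  conv_lhs => rw [← Nat.mod_add_div i N]
  generalize i / N = k
  induction k with
  | zero => simp
  | succ k ih => rw [Nat.mul_succ, ← Nat.add_assoc, p.periodic, ih]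

theorem stmt15 (G : DirGraph) (lab : G.E → G.E → Option Bool)
    {m n : ℕ} (hm : 0 < m) (hn : 0 < n)
    (γ : ClosedEdgePath G n) (δ : ClosedEdgePath G m)
    (q : G.V) (hqγ : G.src (γ.edges 0) = q) (hqδ : G.src (δ.edges 0) = q)
    (hγasc : ∀ i, i + 1 < n → lab (γ.edges i) (γ.edges (i + 1)) ≠ some false)
    (hδasc : ∀ j, j + 1 < m → lab (δ.edges j) (δ.edges (j + 1)) ≠ some false)
    (β : ClosedEdgePath G (m + n))
    (hβ : ∀ j < m + n, β.edges j =
      if j < m then δ.edges j else γ.edges (j - m))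
    (hsmooth : lab (δ.edges (m - 1)) (γ.edges 0) = none ∧
      lab (γ.edges (n - 1)) (δ.edges 0) = none)
    (hcorner : ∃ j < m + n, lab (β.edges j) (β.edges (j + 1)) ≠ none) :
    ∃ (k : ℕ) (_ : 0 < k) (ρ : ClosedEdgePath G k),
      IsSubPath G ρ β ∧ IsPositiveTwisted G lab ρ := by
  have key : ∀ i, lab (β.edges i) (β.edges (i + 1)) ≠ some false := by
    intro i
    have hNp : 0 < m + n := by omega
    have h1 : β.edges i = β.edges (i % (m + n)) := edges_mod G hNp β i
    have h2 : β.edges (i + 1) = β.edges ((i % (m + n) + 1) % (m + n)) := by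
      rw [edges_mod G hNp β (i + 1), Nat.add_mod i 1,
        Nat.mod_eq_of_lt (show 1 < m + n by omega)]
    set j := i % (m + n) with hj
    have hjlt : j < m + n := Nat.mod_lt _ hNp
    rw [h1, h2]
    rcases lt_or_ge (j + 1) (m + n) with hlt | hge
    · rw [Nat.mod_eq_of_lt hlt]
      rw [hβ j (by omega), hβ (j + 1) (by omega)]
      rcases lt_or_ge (j + 1) m with h3 | h3
      · simp only [if_pos (by omega : j < m), if_pos h3]
        exact hδasc j h3
      · rcases lt_or_ge j m with h4 | h4
        · have hje : j = m - 1 := by omega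
          simp only [if_pos h4, if_neg (by omega : ¬ j + 1 < m)]
          rw [hje, show m - 1 + 1 - m = 0 from by omega, hsmooth.1]
          simp
        · simp only [if_neg (by omega : ¬ j < m), if_neg (by omega : ¬ j + 1 < m)]
          have h6 : j + 1 - m = (j - m) + 1 := by omega
          rw [h6]
          exact hγasc (j - m) (by omega)
    · have h0 : (j + 1) % (m + n) = 0 := by
        have : j + 1 = m + n := by omega
        simp [this]
      rw [h0, hβ j (by omega), hβ 0 (by omega)]
      simp only [if_neg (by omega : ¬ j < m), if_pos hm]
      have : j - m = n - 1 := by omega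
      rw [this, hsmooth.2]
      simp
  obtain ⟨j, hjlt, hjc⟩ := hcorner
  exact ⟨m + n, by omega, β, ⟨0, fun k hk => by simp⟩, ⟨j, hjc⟩, key⟩
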